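/- arXiv:0709.1978 — 8 statements merged into one kernel-verified Lean document; each statement's English description precedes it below -/
import Mathlib

section
/- For every nonnegative integer n, the alternating sum ∑_{k=0}^{n} (-1)^{n+k} * C(n+k+1, 2k+1) * 4^k equals n + 1. -/
open Finset

lemma keyAB (n : ℕ) :
    (∑ k ∈ range (n+1), (-1:ℤ)^(n+k) * ((n+k+1).choose (2*k+1)) * 4^k = n+1) ∧
    (∑ k ∈ range (n+1), (-1:ℤ)^(n+k) * ((n+k).choose (2*k)) * 4^k = 2*n+1) := by
  induction n with
  | zero => norm_num
  | succ n ih =>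
    obtain ⟨hA, hB⟩ := ih
    -- D : shifted sum
    have hD : (4:ℤ) * ∑ k ∈ range (n+1), (-1:ℤ)^(n+k) * ((n+k+1).choose (2*k+2)) * 4^k
        = (-1:ℤ)^n - (2*n+1) := by
      rw [Finset.sum_range_succ' _ n] at hB
      have h1 : ∑ k ∈ range n, (-1:ℤ)^(n+(k+1)) * ((n+(k+1)).choose (2*(k+1))) * 4^(k+1)
          = (-4) * ∑ k ∈ range n, (-1:ℤ)^(n+k) * ((n+k+1).choose (2*k+2)) * 4^k := by
        rw [Finset.mul_sum]
        refine Finset.sum_congr rfl fun k _ => ?_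
        simp only [show n+(k+1) = (n+k)+1 from by ring, show 2*(k+1) = 2*k+2 from by ring,
          pow_succ]
        ring
      have h2 : ∑ k ∈ range (n+1), (-1:ℤ)^(n+k) * ((n+k+1).choose (2*k+2)) * 4^k
          = ∑ k ∈ range n, (-1:ℤ)^(n+k) * ((n+k+1).choose (2*k+2)) * 4^k := by
        rw [Finset.sum_range_succ, Nat.choose_eq_zero_of_lt (by omega)]
        norm_num
      rw [h1] at hB
      simp only [add_zero, Nat.choose_zero_right, mul_zero, pow_zero] at hB
      rw [h2]
      push_cast at hB ⊢
      linarith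
    -- B (n+1) = 4 A n - B n
    have hBnew : ∑ k ∈ range (n+2), (-1:ℤ)^(n+1+k) * ((n+1+k).choose (2*k)) * 4^k
        = 4 * (n+1) - (2*n+1) := by
      rw [Finset.sum_range_succ' _ (n+1)]
      have h1 : ∑ k ∈ range (n+1), (-1:ℤ)^(n+1+(k+1)) * ((n+1+(k+1)).choose (2*(k+1))) * 4^(k+1)
          = 4 * ∑ k ∈ range (n+1), (-1:ℤ)^(n+k) * (((n+k+1+1).choose (2*k+2) : ℤ)) * 4^k := by
        rw [Finset.mul_sum]
        refine Finset.sum_congr rfl fun k _ => ?_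
        simp only [show n+1+(k+1) = (n+k)+1+1 from by ring, show 2*(k+1) = 2*k+2 from by ring,
          show n+1+(k+1) = n+k+1+1 from by ring, pow_succ]
        ring
      have h2 : ∀ k, ((n+k+1+1).choose (2*k+2) : ℤ)
          = ((n+k+1).choose (2*k+1) : ℤ) + ((n+k+1).choose (2*k+2) : ℤ) := by
        intro k
        rw [Nat.choose_succ_succ (n+k+1) (2*k+1)]
        push_cast; ring
      have h3 : ∑ k ∈ range (n+1), (-1:ℤ)^(n+k) * (((n+k+1+1).choose (2*k+2) : ℤ)) * 4^k
          = (∑ k ∈ range (n+1), (-1:ℤ)^(n+k) * ((n+k+1).choose (2*k+1)) * 4^k)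
            + ∑ k ∈ range (n+1), (-1:ℤ)^(n+k) * ((n+k+1).choose (2*k+2)) * 4^k := by
        rw [← Finset.sum_add_distrib]
        refine Finset.sum_congr rfl fun k _ => ?_
        rw [h2 k]; ring
      rw [h1, h3, hA]
      simp only [add_zero, Nat.choose_zero_right, mul_zero, pow_zero, Nat.cast_one]
      have : (4:ℤ) * ((↑n+1) + ∑ k ∈ range (n+1), (-1:ℤ)^(n+k) * ((n+k+1).choose (2*k+2)) * 4^k)
          = 4*(↑n+1) + (4 * ∑ k ∈ range (n+1), (-1:ℤ)^(n+k) * ((n+k+1).choose (2*k+2)) * 4^k) := by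
        ring
      rw [this, hD]
      have hsgn : (-1:ℤ)^(n+1+0) = -(-1:ℤ)^n := by
        rw [add_zero, pow_succ]; ring
      rw [hsgn]
      ring
    constructor
    · -- A (n+1) = B(n+1) - A n
      have h2 : ∀ k, ((n+1+k+1).choose (2*k+1) : ℤ)
          = ((n+1+k).choose (2*k) : ℤ) + ((n+1+k).choose (2*k+1) : ℤ) := by
        intro k
        rw [show n+1+k+1 = (n+1+k)+1 from rfl, Nat.choose_succ_succ (n+1+k) (2*k)]
        push_cast; ring
      have h3 : ∑ k ∈ range (n+2), (-1:ℤ)^(n+1+k) * ((n+1+k+1).choose (2*k+1)) * 4^k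
          = (∑ k ∈ range (n+2), (-1:ℤ)^(n+1+k) * ((n+1+k).choose (2*k)) * 4^k)
            + ∑ k ∈ range (n+2), (-1:ℤ)^(n+1+k) * ((n+1+k).choose (2*k+1)) * 4^k := by
        rw [← Finset.sum_add_distrib]
        refine Finset.sum_congr rfl fun k _ => ?_
        rw [h2 k]; ring
      have h4 : ∑ k ∈ range (n+2), (-1:ℤ)^(n+1+k) * ((n+1+k).choose (2*k+1)) * 4^k
          = -(↑n+1) := by
        rw [Finset.sum_range_succ, Nat.choose_eq_zero_of_lt (by omega)]
        have h5 : ∑ k ∈ range (n+1), (-1:ℤ)^(n+1+k) * ((n+1+k).choose (2*k+1)) * 4^k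
            = - ∑ k ∈ range (n+1), (-1:ℤ)^(n+k) * ((n+k+1).choose (2*k+1)) * 4^k := by
          rw [← Finset.sum_neg_distrib]
          refine Finset.sum_congr rfl fun k _ => ?_
          simp only [show n+1+k = (n+k)+1 from by ring, pow_succ]
          ring
        rw [h5, hA]
        norm_num
      rw [h3, h4, hBnew]
      push_cast; ring
    · rw [hBnew]; push_cast; ring

theorem thm1 (n : ℕ) :
    ∑ k ∈ Finset.range (n + 1),
      (-1 : ℤ) ^ (n + k) * ((n + k + 1).choose (2 * k + 1)) * 4 ^ k = n + 1 := by
  exact (keyAB n).1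
end

section
/- For every integer n ≥ -1, the alternating sum ∑_{k=0}^{n+1} (-1)^{n+k+1} * C(n+k+1, 2k) * 4^k equals 2n + 3. -/
private def A (m : ℕ) : ℚ := ∑ k ∈ Finset.range (m+1), (-1)^k * ((m+k).choose (2*k)) * 4^k
private def B (m : ℕ) : ℚ := ∑ k ∈ Finset.range (m+1), (-1)^k * ((m+k).choose (2*k+1)) * 4^k

private lemma Bsucc (m : ℕ) : B (m+1) = A m + B m := by
  unfold A B
  have h : ∀ k, ((m+1+k).choose (2*k+1) : ℚ) = (m+k).choose (2*k) + (m+k).choose (2*k+1) := by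
    intro k
    have : (m+1+k) = (m+k) + 1 := by ring
    rw [this, Nat.choose_succ_succ']
    push_cast; ring
  rw [Finset.sum_range_succ]
  have hz : ((m+1+(m+1)).choose (2*(m+1)+1) : ℚ) = 0 := by
    rw [Nat.choose_eq_zero_of_lt (by omega)]; norm_num
  rw [hz]
  rw [Finset.sum_congr rfl (fun k _ => by rw [h k])]
  rw [show (∑ k ∈ Finset.range (m+1), (-1:ℚ)^k * (((m+k).choose (2*k) : ℚ) + (m+k).choose (2*k+1)) * 4^k) = (∑ k ∈ Finset.range (m+1), (-1:ℚ)^k * ((m+k).choose (2*k)) * 4^k) + ∑ k ∈ Finset.range (m+1), (-1:ℚ)^k * ((m+k).choose (2*k+1)) * 4^k from by rw [← Finset.sum_add_distrib]; exact Finset.sum_congr rfl fun k _ => by ring]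
  ring

private lemma Asucc (m : ℕ) : A (m+1) = A m - 4 * B (m+1) := by
  unfold A B
  rw [Finset.sum_range_succ' (fun k => (-1:ℚ)^k * ((m+1+k).choose (2*k)) * 4^k) (m+1)]
  have h : ∀ j, ((m+1+(j+1)).choose (2*(j+1)) : ℚ)
      = (m+1+j).choose (2*j+1) + (m+1+j).choose (2*(j+1)) := by
    intro j
    have e1 : m+1+(j+1) = (m+1+j) + 1 := by ring
    have e2 : 2*(j+1) = (2*j+1) + 1 := by ring
    rw [e1, e2, Nat.choose_succ_succ']
    push_cast; ring
  rw [Finset.sum_congr rfl (fun j _ => by rw [h j])]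
  have split : (∑ j ∈ Finset.range (m+1), (-1:ℚ)^(j+1) * (((m+1+j).choose (2*j+1) : ℚ) + (m+1+j).choose (2*(j+1))) * 4^(j+1))
      = (-4) * (∑ j ∈ Finset.range (m+1), (-1:ℚ)^j * ((m+1+j).choose (2*j+1)) * 4^j)
        + (-4) * ∑ j ∈ Finset.range (m+1), (-1:ℚ)^j * ((m+1+j).choose (2*(j+1))) * 4^j := by
    rw [Finset.mul_sum, Finset.mul_sum, ← Finset.sum_add_distrib]
    exact Finset.sum_congr rfl fun j _ => by ring
  rw [split]
  -- second sum equals -(1/4)*(A m - 1)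
  have hsecond : (∑ j ∈ Finset.range (m+1), (-1:ℚ)^j * ((m+1+j).choose (2*(j+1))) * 4^j)
      = -(1/4) * ((∑ k ∈ Finset.range (m+1), (-1:ℚ)^k * ((m+k).choose (2*k)) * 4^k) - 1) := by
    have expand : (∑ k ∈ Finset.range (m+2), (-1:ℚ)^k * ((m+k).choose (2*k)) * 4^k)
        = (∑ k ∈ Finset.range (m+1), (-1:ℚ)^k * ((m+k).choose (2*k)) * 4^k) := by
      rw [Finset.sum_range_succ]
      have hz : ((m+(m+1)).choose (2*(m+1)) : ℚ) = 0 := by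
        rw [Nat.choose_eq_zero_of_lt (by omega)]; norm_num
      rw [hz]; ring
    have shift : (∑ k ∈ Finset.range (m+2), (-1:ℚ)^k * ((m+k).choose (2*k)) * 4^k)
        = (∑ j ∈ Finset.range (m+1), (-1:ℚ)^(j+1) * ((m+(j+1)).choose (2*(j+1))) * 4^(j+1)) + 1 := by
      rw [Finset.sum_range_succ' (fun k => (-1:ℚ)^k * ((m+k).choose (2*k)) * 4^k) (m+1)]
      norm_num
    have : (∑ j ∈ Finset.range (m+1), (-1:ℚ)^(j+1) * ((m+(j+1)).choose (2*(j+1))) * 4^(j+1))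
        = (-4) * ∑ j ∈ Finset.range (m+1), (-1:ℚ)^j * ((m+1+j).choose (2*(j+1))) * 4^j := by
      rw [Finset.mul_sum]
      exact Finset.sum_congr rfl fun j _ => by rw [show m+(j+1) = m+1+j from by ring]; ring
    rw [this] at shift
    rw [expand] at shift
    linarith
  rw [hsecond]
  rw [Finset.sum_range_succ (fun k => (-1:ℚ)^k * ((m+1+k).choose (2*k+1)) * 4^k) (m+1)]
  have hz : ((m+1+(m+1)).choose (2*(m+1)+1) : ℚ) = 0 := by
    rw [Nat.choose_eq_zero_of_lt (by omega)]; norm_num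
  simp only [hz, Nat.mul_zero, Nat.choose_zero_right, Nat.cast_one]
  ring

private lemma AB (m : ℕ) : A m = (-1)^m * (2*m+1) ∧ B m = (-1)^(m+1) * m := by
  induction m with
  | zero => constructor <;> simp [A, B]
  | succ m ih =>
    obtain ⟨hA, hB⟩ := ih
    have hB' : B (m+1) = (-1)^(m+2) * (m+1) := by
      rw [Bsucc, hA, hB]; push_cast; ring
    refine ⟨?_, by rw [hB']; push_cast; ring⟩
    rw [Asucc, hA, hB']; push_cast; ring

theorem thm2 (n : ℤ) (hn : -1 ≤ n) :
    ∑ k ∈ Finset.range (n + 2).toNat,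
      (-1 : ℚ) ^ (n + k + 1) * ((n + k + 1).toNat.choose (2 * k)) * 4 ^ k
      = 2 * n + 3 := by
  obtain ⟨m, hm⟩ : ∃ m : ℕ, n = (m : ℤ) - 1 := ⟨(n+1).toNat, by omega⟩
  subst hm
  have h1 : ((m : ℤ) - 1 + 2).toNat = m + 1 := by omega
  rw [h1]
  have key := (AB m).1
  unfold A at key
  have h4 : (-1:ℚ)^m * (-1:ℚ)^m = 1 := by
    rw [← pow_add, ← two_mul, pow_mul]; norm_num
  have step : (∑ k ∈ Finset.range (m + 1),
      (-1 : ℚ) ^ ((m:ℤ) - 1 + k + 1) * (((m:ℤ) - 1 + k + 1).toNat.choose (2 * k)) * 4 ^ k)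
      = (-1:ℚ)^m * ∑ k ∈ Finset.range (m+1), (-1:ℚ)^k * (((m+k).choose (2*k) : ℚ)) * 4^k := by
    rw [Finset.mul_sum]
    refine Finset.sum_congr rfl fun k hk => ?_
    have h2 : ((m : ℤ) - 1 + k + 1).toNat = m + k := by omega
    have h3 : ((m : ℤ) - 1 + k + 1) = ((m + k : ℕ) : ℤ) := by push_cast; ring
    rw [h2, h3, zpow_natCast, pow_add]
    ring
  rw [step, key]
  push_cast
  linear_combination (2*(m:ℚ)+1) * h4
end

section
/- For every positive integer n, the double sum ∑_{k=0}^{n} ∑_{m=2k+1}^{n+k+1} (-1)^{m+k+n+1} * C(n+k+1, m) * 2^{m-1} equals (n+1)^2. -/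
open Finset

/-- `aSeq N = ∑ j, (-1)^j * C(N-j, j) * 2^(N-2j)` (terms with `2j > N` vanish). -/
def aSeq (N : ℕ) : ℤ :=
  ∑ j ∈ Finset.range (N + 1), (-1 : ℤ) ^ j * ((N - j).choose j) * 2 ^ (N - 2 * j)

lemma aSeq_rec (N : ℕ) : aSeq (N + 2) = 2 * aSeq (N + 1) - aSeq N := by
  have h1 : aSeq (N + 2)
      = (∑ j ∈ Finset.range (N + 2),
          (-1 : ℤ) ^ (j+1) * ((N + 1 - j).choose (j+1)) * 2 ^ (N - 2 * j)) + 2 ^ (N + 2) := by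
    rw [aSeq, Finset.sum_range_succ' _ (N + 2)]
    simp only [pow_zero, Nat.sub_zero, Nat.choose_zero_right, Nat.cast_one, one_mul, mul_one]
    congr 1
    apply Finset.sum_congr rfl
    intro j hj
    have e1 : N + 2 - (j+1) = N + 1 - j := by omega
    have e2 : N + 2 - 2 * (j+1) = N - 2 * j := by omega
    rw [e1, e2]
  -- Pascal (or both sides zero) pointwise
  have h2 : ∀ j, j < N + 2 →
      ((N + 1 - j).choose (j+1) : ℤ) = ((N - j).choose (j+1)) + ((N - j).choose j) := by
    intro j hj
    by_cases hjN : j ≤ N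
    · have : N + 1 - j = (N - j) + 1 := by omega
      rw [this, Nat.choose_succ_succ']
      push_cast; ring
    · have hj' : j = N + 1 := by omega
      subst hj'
      simp
  have h3 : aSeq (N + 2)
      = (∑ j ∈ Finset.range (N + 2),
          (-1 : ℤ) ^ (j+1) * ((N - j).choose (j+1)) * 2 ^ (N - 2 * j))
        + (∑ j ∈ Finset.range (N + 2),
          (-1 : ℤ) ^ (j+1) * ((N - j).choose j) * 2 ^ (N - 2 * j)) + 2 ^ (N + 2) := by
    rw [h1, ← Finset.sum_add_distrib]
    congr 1
    apply Finset.sum_congr rfl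
    intro j hj
    rw [h2 j (Finset.mem_range.mp hj)]
    ring
  -- third sum is -aSeq N
  have h4 : (∑ j ∈ Finset.range (N + 2),
      (-1 : ℤ) ^ (j+1) * ((N - j).choose j) * 2 ^ (N - 2 * j)) = - aSeq N := by
    rw [aSeq, Finset.sum_range_succ _ (N+1)]
    have hz : ((N - (N+1)).choose (N+1) : ℤ) = 0 := by
      norm_cast
      exact Nat.choose_eq_zero_of_lt (by omega)
    rw [hz, ← Finset.sum_neg_distrib]
    rw [mul_zero, zero_mul, add_zero]
    apply Finset.sum_congr rfl
    intro j hj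
    ring
  -- second sum is 2 * aSeq (N+1) - 2^(N+2)
  have h5 : (∑ j ∈ Finset.range (N + 2),
      (-1 : ℤ) ^ (j+1) * ((N - j).choose (j+1)) * 2 ^ (N - 2 * j))
      = 2 * aSeq (N + 1) - 2 ^ (N + 2) := by
    have key : ∀ j ∈ Finset.range (N + 2),
        (-1 : ℤ) ^ (j+1) * ((N - j).choose (j+1)) * 2 ^ (N - 2 * j)
        = 2 * ((-1 : ℤ) ^ (j+1) * ((N + 1 - (j+1)).choose (j+1)) * 2 ^ (N + 1 - 2 * (j+1))) := by
      intro j hj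
      have hNj : N + 1 - (j + 1) = N - j := by omega
      rw [hNj]
      by_cases hc : 2 * j + 1 ≤ N
      · have : N - 2 * j = (N + 1 - 2 * (j + 1)) + 1 := by omega
        rw [this, pow_succ]
        ring
      · have hz : ((N - j).choose (j+1) : ℤ) = 0 := by
          norm_cast
          exact Nat.choose_eq_zero_of_lt (by omega)
        rw [hz]
        ring
    rw [Finset.sum_congr rfl key, ← Finset.mul_sum]
    have hrest : (∑ j ∈ Finset.range (N + 2),
        ((-1 : ℤ) ^ (j+1) * ((N + 1 - (j+1)).choose (j+1)) * 2 ^ (N + 1 - 2 * (j+1))))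
        = aSeq (N + 1) - 2 ^ (N + 1) := by
      rw [Finset.sum_range_succ _ (N + 1), aSeq, Finset.sum_range_succ' _ (N + 1)]
      have hz : ((N + 1 - (N + 1 + 1)).choose (N + 1 + 1) : ℤ) = 0 := by
        norm_cast
        exact Nat.choose_eq_zero_of_lt (by omega)
      have hg0 : (-1 : ℤ) ^ 0 * (((N + 1 - 0).choose 0 : ℕ) : ℤ) * 2 ^ (N + 1 - 2 * 0)
          = 2 ^ (N + 1) := by simp
      rw [hz, hg0]
      ring
    rw [hrest]
    ring
  rw [h3, h4, h5]
  ring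

lemma aSeq_eq (N : ℕ) : aSeq N = (N : ℤ) + 1 := by
  induction N using Nat.twoStepInduction with
  | zero => simp [aSeq]
  | one => simp [aSeq, Finset.sum_range_succ]
  | more n ih1 ih2 =>
    rw [aSeq_rec, ih2, ih1]
    push_cast
    ring

/-- Inner sum after reindexing. -/
def G (n k : ℕ) : ℤ :=
  ∑ i ∈ Finset.range (n - k + 1), (-1 : ℤ) ^ i * ((n + k + 1).choose i) * 2 ^ (n + k - i)

lemma G_succ (n k : ℕ) (hk : k ≤ n) :
    G (n + 1) k = G n k + (-1 : ℤ) ^ (n + 1 - k) * ((n + k + 1).choose (n + 1 - k)) * 4 ^ k := by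
  have hrange : n + 1 - k + 1 = (n - k + 1) + 1 := by omega
  rw [G, hrange, Finset.sum_range_succ' _ (n - k + 1)]
  have h0 : (-1 : ℤ) ^ 0 * ((n + 1 + k + 1).choose 0) * 2 ^ (n + 1 + k - 0) = 2 ^ (n + k + 1) := by
    have e : n + 1 + k - 0 = n + k + 1 := by omega
    rw [e]
    simp
  rw [h0]
  have key : ∀ i ∈ Finset.range (n - k + 1),
      (-1 : ℤ) ^ (i+1) * ((n + 1 + k + 1).choose (i+1)) * 2 ^ (n + 1 + k - (i+1))
      = (-1 : ℤ) ^ (i+1) * ((n + k + 1).choose i) * 2 ^ (n + k - i)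
        + (-1 : ℤ) ^ (i+1) * ((n + k + 1).choose (i+1)) * 2 ^ (n + k - i) := by
    intro i hi
    have h1 : n + 1 + k + 1 = (n + k + 1) + 1 := by omega
    have h2 : n + 1 + k - (i+1) = n + k - i := by omega
    rw [h1, h2, Nat.choose_succ_succ']
    push_cast
    ring
  rw [Finset.sum_congr rfl key, Finset.sum_add_distrib]
  have hA : (∑ i ∈ Finset.range (n - k + 1),
      (-1 : ℤ) ^ (i+1) * ((n + k + 1).choose i) * 2 ^ (n + k - i)) = - G n k := by
    rw [G, ← Finset.sum_neg_distrib]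
    apply Finset.sum_congr rfl
    intro i hi
    ring
  have hB : (∑ i ∈ Finset.range (n - k + 1),
      (-1 : ℤ) ^ (i+1) * ((n + k + 1).choose (i+1)) * 2 ^ (n + k - i))
      = 2 * G n k - 2 ^ (n + k + 1)
        + (-1 : ℤ) ^ (n + 1 - k) * ((n + k + 1).choose (n + 1 - k)) * 4 ^ k := by
    -- rewrite each term as F (i+1) where F j = (-1)^j C(n+k+1,j) 2^(n+k+1-j)
    have key2 : ∀ i ∈ Finset.range (n - k + 1),
        (-1 : ℤ) ^ (i+1) * ((n + k + 1).choose (i+1)) * 2 ^ (n + k - i)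
        = (-1 : ℤ) ^ (i+1) * ((n + k + 1).choose (i+1)) * 2 ^ (n + k + 1 - (i+1)) := by
      intro i hi
      have : n + k + 1 - (i+1) = n + k - i := by omega
      rw [this]
    rw [Finset.sum_congr rfl key2]
    have expand : (∑ i ∈ Finset.range (n - k + 1),
        ((-1 : ℤ) ^ (i+1) * ((n + k + 1).choose (i+1)) * 2 ^ (n + k + 1 - (i+1))))
        = (∑ j ∈ Finset.range (n - k + 2),
            ((-1 : ℤ) ^ j * ((n + k + 1).choose j) * 2 ^ (n + k + 1 - j))) - 2 ^ (n + k + 1) := by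
      rw [Finset.sum_range_succ' _ (n - k + 1)]
      simp only [pow_zero, Nat.sub_zero, Nat.choose_zero_right, Nat.cast_one, one_mul, mul_one]
      ring
    rw [expand]
    have split : (∑ j ∈ Finset.range (n - k + 2),
        ((-1 : ℤ) ^ j * ((n + k + 1).choose j) * 2 ^ (n + k + 1 - j)))
        = (∑ j ∈ Finset.range (n - k + 1),
            ((-1 : ℤ) ^ j * ((n + k + 1).choose j) * 2 ^ (n + k + 1 - j)))
          + (-1 : ℤ) ^ (n - k + 1) * ((n + k + 1).choose (n - k + 1)) * 2 ^ (n + k + 1 - (n - k + 1)) := by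
      rw [Finset.sum_range_succ]
    have double : (∑ j ∈ Finset.range (n - k + 1),
        ((-1 : ℤ) ^ j * ((n + k + 1).choose j) * 2 ^ (n + k + 1 - j))) = 2 * G n k := by
      rw [G, Finset.mul_sum]
      apply Finset.sum_congr rfl
      intro j hj
      have hj' : j ≤ n - k := by have := Finset.mem_range.mp hj; omega
      have : n + k + 1 - j = (n + k - j) + 1 := by omega
      rw [this, pow_succ]
      ring
    have e1 : n - k + 1 = n + 1 - k := by omega
    have e2 : n + k + 1 - (n - k + 1) = 2 * k := by omega
    have e3 : (2 : ℤ) ^ (2 * k) = 4 ^ k := by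
      rw [pow_mul]; norm_num
    rw [split, double, e2, e3, e1]
    ring
  rw [hA, hB]
  ring

lemma G_diag (n : ℕ) : G n n = 4 ^ n := by
  rw [G]
  simp only [Nat.sub_self, zero_add, Finset.sum_range_one, pow_zero, Nat.choose_zero_right,
    Nat.cast_one, one_mul, Nat.sub_zero]
  rw [show n + n = 2 * n by ring, pow_mul]
  norm_num

lemma S_eq (n : ℕ) : ∑ k ∈ Finset.range (n + 1), G n k = ((n : ℤ) + 1) ^ 2 := by
  induction n with
  | zero => simp [G]
  | succ n ih =>
    rw [Finset.sum_range_succ, G_diag]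
    have hstep : ∀ k ∈ Finset.range (n + 1),
        G (n + 1) k = G n k + (-1 : ℤ) ^ (n + 1 - k) * ((n + k + 1).choose (n + 1 - k)) * 4 ^ k := by
      intro k hk
      exact G_succ n k (by have := Finset.mem_range.mp hk; omega)
    rw [Finset.sum_congr rfl hstep, Finset.sum_add_distrib, ih]
    have hext : (∑ k ∈ Finset.range (n + 1),
        (-1 : ℤ) ^ (n + 1 - k) * ((n + k + 1).choose (n + 1 - k)) * 4 ^ k) + 4 ^ (n + 1)
        = ∑ k ∈ Finset.range (n + 2),
            (-1 : ℤ) ^ (n + 1 - k) * ((n + k + 1).choose (n + 1 - k)) * 4 ^ k := by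
      conv_rhs => rw [Finset.sum_range_succ]
      congr 1
      simp
    -- reflect
    have hrefl : (∑ k ∈ Finset.range (n + 2),
        (-1 : ℤ) ^ (n + 1 - k) * ((n + k + 1).choose (n + 1 - k)) * 4 ^ k)
        = ∑ j ∈ Finset.range (n + 2),
            (-1 : ℤ) ^ j * ((2 * n + 2 - j).choose j) * 2 ^ (2 * n + 2 - 2 * j) := by
      rw [← Finset.sum_range_reflect
        (fun j => (-1 : ℤ) ^ j * ((2 * n + 2 - j).choose j) * 2 ^ (2 * n + 2 - 2 * j)) (n + 2)]
      apply Finset.sum_congr rfl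
      intro k hk
      have hk' : k ≤ n + 1 := by have := Finset.mem_range.mp hk; omega
      have e0 : n + 2 - 1 - k = n + 1 - k := by omega
      have e1 : 2 * n + 2 - (n + 1 - k) = n + k + 1 := by omega
      have e2 : 2 * n + 2 - 2 * (n + 1 - k) = 2 * k := by omega
      simp only [e0, e1, e2]
      rw [pow_mul]
      norm_num
    have haseq : (∑ j ∈ Finset.range (n + 2),
        (-1 : ℤ) ^ j * ((2 * n + 2 - j).choose j) * 2 ^ (2 * n + 2 - 2 * j))
        = aSeq (2 * n + 2) := by
      rw [aSeq]
      apply Finset.sum_subset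
      · intro x hx
        simp only [Finset.mem_range] at hx ⊢
        omega
      · intro x hx hx'
        simp only [Finset.mem_range] at hx hx'
        have hz : ((2 * n + 2 - x).choose x : ℤ) = 0 := by
          norm_cast
          exact Nat.choose_eq_zero_of_lt (by omega)
        rw [hz]
        ring
    rw [add_assoc, hext, hrefl, haseq, aSeq_eq]
    push_cast
    ring

theorem cor1 (n : ℕ) (hn : 1 ≤ n) :
    ∑ k ∈ Finset.range (n + 1), ∑ m ∈ Finset.Icc (2 * k + 1) (n + k + 1),
      (-1 : ℤ) ^ (m + k + n + 1) * ((n + k + 1).choose m) * 2 ^ (m - 1)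
      = (n + 1) ^ 2 := by
  have inner : ∀ k ∈ Finset.range (n + 1),
      (∑ m ∈ Finset.Icc (2 * k + 1) (n + k + 1),
        (-1 : ℤ) ^ (m + k + n + 1) * ((n + k + 1).choose m) * 2 ^ (m - 1)) = G n k := by
    intro k hk
    have hkn : k ≤ n := by have := Finset.mem_range.mp hk; omega
    rw [← Finset.Ico_add_one_right_eq_Icc, Finset.sum_Ico_eq_sum_range]
    have hcard : n + k + 1 + 1 - (2 * k + 1) = n - k + 1 := by omega
    rw [hcard, G]
    rw [← Finset.sum_range_reflect
      (fun i => (-1 : ℤ) ^ i * ((n + k + 1).choose i) * 2 ^ (n + k - i)) (n - k + 1)]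
    apply Finset.sum_congr rfl
    intro i hi
    have hi' : i ≤ n - k := by have := Finset.mem_range.mp hi; omega
    have hj : n - k + 1 - 1 - i = n - k - i := by omega
    simp only [hj]
    have e1 : 2 * k + 1 + i + k + n + 1 = (n - k - i) + 2 * (n + k + 1 - (n - k - i)) := by omega
    have e2 : (n + k + 1).choose (2 * k + 1 + i) = (n + k + 1).choose (n - k - i) := by
      have h : 2 * k + 1 + i = n + k + 1 - (n - k - i) := by omega
      rw [h]
      exact Nat.choose_symm (by omega)
    have e3 : 2 * k + 1 + i - 1 = n + k - (n - k - i) := by omega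
    rw [e1, e2, e3, pow_add, pow_mul]
    norm_num
  rw [Finset.sum_congr rfl inner, S_eq]
end

section
/- For every nonnegative integer n, the double sum ∑_{k=0}^{2n} ∑_{m=2k+2}^{2n+2k+2} (-1)^{m+k} * C(2n+k+2, m) * 2^{m-1} equals (2n+1)(2n+2). -/
open Finset

private def HH (m r : ℕ) : ℤ :=
  ∑ k ∈ range (m + 1), (-4) ^ k * ((m + k).choose (2 * k + r))

private lemma HH_pascal (m r : ℕ) : HH (m + 1) (r + 1) = HH m (r + 1) + HH m r := by
  unfold HH
  rw [Finset.sum_range_succ]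
  have h0 : ((m + 1 + (m + 1)).choose (2 * (m + 1) + (r + 1))) = 0 :=
    Nat.choose_eq_zero_of_lt (by omega)
  rw [h0, ← Finset.sum_add_distrib]
  push_cast
  rw [mul_zero, add_zero]
  apply Finset.sum_congr rfl
  intro k _
  have e1 : m + 1 + k = (m + k) + 1 := by ring
  have e2 : 2 * k + (r + 1) = (2 * k + r) + 1 := by ring
  rw [e1, e2, Nat.choose_succ_succ]
  push_cast
  ring

private lemma HH_rec0 (m : ℕ) : HH (m + 1) 0 = 1 - 4 * HH (m + 1) 1 - 4 * HH (m + 1) 2 := by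
  have key : HH (m + 1) 0
      = 1 + ∑ k ∈ range (m + 1),
          ((-4:ℤ) ^ (k+1) * (((m + 1 + k).choose (2 * k + 1) : ℤ)) +
           (-4:ℤ) ^ (k+1) * (((m + 1 + k).choose (2 * k + 2) : ℤ))) := by
    unfold HH
    rw [Finset.sum_range_succ']
    simp only [pow_zero, one_mul, Nat.add_zero, Nat.mul_zero, Nat.choose_zero_right]
    rw [add_comm]
    congr 1
    · apply Finset.sum_congr rfl
      intro k _
      have e1 : m + 1 + (k + 1) = (m + 1 + k) + 1 := by ring
      have e2 : 2 * (k + 1) = (2 * k + 1) + 1 := by ring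
      rw [e1, e2, Nat.choose_succ_succ]
      push_cast
      ring
  rw [key, Finset.sum_add_distrib]
  have h1 : ∑ k ∈ range (m + 1), (-4:ℤ) ^ (k+1) * ((m + 1 + k).choose (2 * k + 1))
      = -4 * HH (m + 1) 1 := by
    unfold HH
    conv_rhs => rw [Finset.sum_range_succ]
    have h0 : ((m + 1 + (m + 1)).choose (2 * (m + 1) + 1)) = 0 :=
      Nat.choose_eq_zero_of_lt (by omega)
    rw [h0]
    push_cast
    rw [mul_zero, add_zero, Finset.mul_sum]
    apply Finset.sum_congr rfl
    intro k _
    ring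
  have h2 : ∑ k ∈ range (m + 1), (-4:ℤ) ^ (k+1) * ((m + 1 + k).choose (2 * k + 2))
      = -4 * HH (m + 1) 2 := by
    unfold HH
    conv_rhs => rw [Finset.sum_range_succ]
    have h0 : ((m + 1 + (m + 1)).choose (2 * (m + 1) + 2)) = 0 :=
      Nat.choose_eq_zero_of_lt (by omega)
    rw [h0]
    push_cast
    rw [mul_zero, add_zero, Finset.mul_sum]
    apply Finset.sum_congr rfl
    intro k _
    ring
  rw [h1, h2]
  ring

private lemma HH_vals : ∀ m : ℕ, HH m 0 = (-1) ^ m * (2 * m + 1)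
    ∧ HH m 1 = (-1) ^ (m + 1) * m ∧ HH m 2 = (-1) ^ m * (m / 2 : ℕ) := by
  intro m
  induction m with
  | zero => refine ⟨?_, ?_, ?_⟩ <;> simp [HH]
  | succ m ih =>
    obtain ⟨h0, h1, h2⟩ := ih
    have neg : (-1 : ℤ) ^ (m + 1) = -(-1) ^ m := by rw [pow_succ]; ring
    have p1 : HH (m + 1) 1 = (-1) ^ (m + 1 + 1) * (m + 1) := by
      have := HH_pascal m 0
      rw [this, h1, h0]
      rw [show (m:ℕ) + 1 + 1 = m + 2 from rfl, pow_succ, pow_succ]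
      ring
    have p2 : HH (m + 1) 2 = (-1) ^ (m + 1) * ((m + 1) / 2 : ℕ) := by
      have := HH_pascal m 1
      rw [this, h2, h1, neg]
      rcases Nat.even_or_odd m with ⟨t, rfl⟩ | ⟨t, rfl⟩
      · have e1 : (t + t) / 2 = t := by omega
        have e2 : (t + t + 1) / 2 = t := by omega
        rw [e1, e2]
        push_cast
        ring
      · have e1 : (2 * t + 1) / 2 = t := by omega
        have e2 : (2 * t + 1 + 1) / 2 = t + 1 := by omega
        rw [e1, e2]
        push_cast
        ring
    refine ⟨?_, p1, p2⟩
    rw [HH_rec0, p1, p2, neg]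
    rcases Nat.even_or_odd m with ⟨t, rfl⟩ | ⟨t, rfl⟩
    · have e2 : (t + t + 1) / 2 = t := by omega
      have s1 : (-1 : ℤ) ^ (t + t) = 1 := by
        rw [show t + t = 2 * t from by ring, pow_mul]; norm_num
      rw [e2]
      simp only [pow_succ, s1]
      push_cast
      ring
    · have e2 : (2 * t + 1 + 1) / 2 = t + 1 := by omega
      have s1 : (-1 : ℤ) ^ (2 * t) = 1 := by rw [pow_mul]; norm_num
      have s2 : (-1 : ℤ) ^ (2 * t + 1) = -1 := by rw [pow_succ, s1]; ring
      rw [e2]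
      simp only [pow_succ, s1, s2]
      push_cast
      ring

private lemma HH_zero_of_gt {m r : ℕ} (h : m < r) : HH m r = 0 := by
  unfold HH
  apply Finset.sum_eq_zero
  intro k _
  rw [Nat.choose_eq_zero_of_lt (by omega)]
  simp

private def TT (m : ℕ) : ℤ := ∑ j ∈ range (m + 1), (-2) ^ (j + 2) * HH (m + 2) (j + 2)

private lemma TT_succ (m : ℕ) : TT (m + 1) = -TT m + 4 * HH (m + 2) 1 := by
  unfold TT
  have step : ∑ j ∈ range (m + 2), (-2:ℤ) ^ (j + 2) * HH (m + 1 + 2) (j + 2)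
      = ∑ j ∈ range (m + 2), ((-2:ℤ) ^ (j + 2) * HH (m + 2) (j + 2)
          + (-2:ℤ) ^ (j + 2) * HH (m + 2) (j + 1)) := by
    apply Finset.sum_congr rfl
    intro j _
    rw [show m + 1 + 2 = (m + 2) + 1 from rfl, show (j:ℕ) + 2 = (j + 1) + 1 from rfl,
      HH_pascal]
    ring
  rw [step, Finset.sum_add_distrib]
  have hA : ∑ j ∈ range (m + 2), (-2:ℤ) ^ (j + 2) * HH (m + 2) (j + 2)
      = ∑ j ∈ range (m + 1), (-2:ℤ) ^ (j + 2) * HH (m + 2) (j + 2) := by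
    rw [Finset.sum_range_succ, HH_zero_of_gt (by omega)]
    ring
  have hB : ∑ j ∈ range (m + 2), (-2:ℤ) ^ (j + 2) * HH (m + 2) (j + 1)
      = (-2) * ∑ j ∈ range (m + 1), (-2:ℤ) ^ (j + 2) * HH (m + 2) (j + 2)
        + 4 * HH (m + 2) 1 := by
    rw [Finset.sum_range_succ', Finset.mul_sum]
    congr 1
    · apply Finset.sum_congr rfl
      intro j _
      ring
  rw [hA, hB]
  ring

private lemma TT_closed (m : ℕ) : TT m = 2 * (-1) ^ m * (m + 2) * (m + 1) := by
  induction m with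
  | zero =>
    have := (HH_vals 2).2.2
    unfold TT
    rw [Finset.sum_range_one]
    rw [this]
    norm_num
  | succ m ih =>
    rw [TT_succ, ih, (HH_vals (m + 2)).2.1]
    rw [show (m:ℕ) + 2 + 1 = (m + 1) + 2 from rfl]
    simp only [pow_succ]
    push_cast
    ring

theorem cor2 (n : ℕ) :
    ∑ k ∈ Finset.range (2 * n + 1), ∑ m ∈ Finset.Icc (2 * k + 2) (2 * n + 2 * k + 2),
      (-1 : ℤ) ^ (m + k) * ((2 * n + k + 2).choose m) * 2 ^ (m - 1)
      = (2 * n + 1) * (2 * n + 2) := by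
  have key : 2 * ∑ k ∈ Finset.range (2 * n + 1), ∑ m ∈ Finset.Icc (2 * k + 2) (2 * n + 2 * k + 2),
      (-1 : ℤ) ^ (m + k) * ((2 * n + k + 2).choose m) * 2 ^ (m - 1) = TT (2 * n) := by
    rw [Finset.mul_sum]
    have inner : ∀ k, 2 * ∑ m ∈ Finset.Icc (2 * k + 2) (2 * n + 2 * k + 2),
        (-1 : ℤ) ^ (m + k) * ((2 * n + k + 2).choose m) * 2 ^ (m - 1)
        = ∑ i ∈ range (2 * n + 1),
            2 * ((-1 : ℤ) ^ (2 * k + 2 + i + k) * ((2 * n + k + 2).choose (2 * k + 2 + i))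
              * 2 ^ (2 * k + 1 + i)) := by
      intro k
      rw [show 2 * n + 2 * k + 2 = (2 * n + 2 * k + 2 + 1) - 1 from by omega,
        ← Finset.Ico_add_one_right_eq_Icc, show (2 * n + 2 * k + 2 + 1 - 1) + 1 = 2 * n + 2 * k + 3 from by omega,
        Finset.sum_Ico_eq_sum_range,
        show 2 * n + 2 * k + 3 - (2 * k + 2) = 2 * n + 1 from by omega, Finset.mul_sum]
      apply Finset.sum_congr rfl
      intro i _
      rw [show 2 * k + 2 + i - 1 = 2 * k + 1 + i from by omega]
    rw [Finset.sum_congr rfl (fun k _ => inner k), Finset.sum_comm]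
    unfold TT
    apply Finset.sum_congr rfl
    intro i _
    have hz1 : HH (2 * n + 2) (i + 2)
        = ∑ k ∈ range (2 * n + 1), (-4:ℤ) ^ k * ((2 * n + 2 + k).choose (2 * k + (i + 2))) := by
      unfold HH
      rw [show 2 * n + 2 + 1 = (2 * n + 2) + 1 from rfl, Finset.sum_range_succ,
        show (2 * n + 2 : ℕ) = (2 * n + 1) + 1 from rfl, Finset.sum_range_succ]
      rw [Nat.choose_eq_zero_of_lt (by omega), Nat.choose_eq_zero_of_lt (by omega)]
      push_cast
      ring
    rw [hz1, Finset.mul_sum]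
    apply Finset.sum_congr rfl
    intro k _
    have hc : ((2 * n + 2 + k).choose (2 * k + (i + 2))) = ((2 * n + k + 2).choose (2 * k + 2 + i)) := by
      rw [show 2 * n + 2 + k = 2 * n + k + 2 from by ring, show 2 * k + (i + 2) = 2 * k + 2 + i from by ring]
    have e1 : (-1:ℤ) ^ (2 * k + 2 + i + k) = (-1) ^ i * (-1) ^ k := by
      rw [show 2 * k + 2 + i + k = 2 * (k + 1) + (i + k) from by omega, pow_add, pow_mul]
      norm_num
      rw [pow_add]
    have e2 : (-2:ℤ) ^ (i + 2) = (-1) ^ i * 2 ^ (i + 2) := by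
      rw [show (-2:ℤ) = (-1) * 2 from by norm_num, mul_pow, pow_add]
      norm_num
    have e3 : (-4:ℤ) ^ k = (-1) ^ k * 2 ^ (2 * k) := by
      rw [show (-4:ℤ) = (-1) * 2 ^ 2 from by norm_num, mul_pow, ← pow_mul]
    have e4 : (2:ℤ) ^ (2 * k + 1 + i) = 2 ^ (2 * k) * 2 ^ (i + 1) := by
      rw [← pow_add]
      congr 1
      omega
    rw [hc, e1, e2, e3, e4, show (2:ℤ) ^ (i + 2) = 2 ^ (i + 1) * 2 from by rw [pow_succ]]
    ring
  have tval := TT_closed (2 * n)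
  have s1 : (-1 : ℤ) ^ (2 * n) = 1 := by rw [pow_mul]; norm_num
  rw [s1] at tval
  rw [tval] at key
  push_cast at key ⊢
  linarith
end

section
/- For every nonnegative integer n, the double sum ∑_{k=0}^{2n+1} ∑_{m=2k+1}^{2n+k+2} (-1)^{m+k} * C(2n+k+2, m) * 2^{m-1} equals (2n+2)^2. -/
open Finset

private def psi (N j : ℕ) : ℤ := ∑ m ∈ Icc j N, (-1) ^ m * (N.choose m) * 2 ^ m

private lemma psi_step (N j : ℕ) :
    psi N j = (-1) ^ j * (N.choose j) * 2 ^ j + psi N (j + 1) := by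
  by_cases h : j ≤ N
  · rw [psi, ← Finset.Ioc_insert_left h, Finset.sum_insert (by simp), psi, Finset.Icc_add_one_left_eq_Ioc]
  · have h1 : Icc j N = ∅ := Finset.Icc_eq_empty (by omega)
    have h2 : Icc (j + 1) N = ∅ := Finset.Icc_eq_empty (by omega)
    have h3 : N.choose j = 0 := Nat.choose_eq_zero_of_lt (by omega)
    simp [psi, h1, h2, h3]

private lemma psi_zero (N : ℕ) : psi N 0 = (-1) ^ N := by
  have h : Icc 0 N = range (N + 1) := by rw [← Nat.Ico_zero_eq_range, Finset.Ico_add_one_right_eq_Icc]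
  have hp := add_pow (-2 : ℤ) 1 N
  rw [psi, h]
  have hc : ∀ m ∈ range (N + 1), ((-1 : ℤ)) ^ m * (N.choose m) * 2 ^ m
      = (-2 : ℤ) ^ m * 1 ^ (N - m) * (N.choose m) := by
    intro m _
    rw [one_pow, show ((-2 : ℤ)) ^ m = (-1) ^ m * 2 ^ m from by
      rw [show ((-2) : ℤ) = (-1) * 2 from by norm_num, mul_pow]]
    ring
  rw [Finset.sum_congr rfl hc, ← hp]
  norm_num

private lemma psi_pascal (N j : ℕ) : psi (N + 1) (j + 1) = psi N (j + 1) - 2 * psi N j := by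
  by_cases h : j ≤ N
  · have hmap : Icc (j + 1) (N + 1) = (Icc j N).map (addRightEmbedding 1) :=
      (Finset.map_add_right_Icc j N 1).symm
    have hc : ∀ m ∈ Icc j N, ((-1 : ℤ)) ^ (m + 1) * ((N + 1).choose (m + 1)) * 2 ^ (m + 1)
        = (-2) * ((-1) ^ m * (N.choose m) * 2 ^ m)
          + (-1) ^ (m + 1) * (N.choose (m + 1)) * 2 ^ (m + 1) := by
      intro m _
      rw [Nat.choose_succ_succ]
      push_cast
      ring
    have hB : ∑ m ∈ Icc j N, ((-1 : ℤ)) ^ (m + 1) * (N.choose (m + 1)) * 2 ^ (m + 1)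
        = psi N (j + 1) + (-1) ^ (N + 1) * (N.choose (N + 1)) * 2 ^ (N + 1) := by
      have : ∑ m ∈ Icc j N, ((-1 : ℤ)) ^ (m + 1) * (N.choose (m + 1)) * 2 ^ (m + 1)
          = ∑ m ∈ Icc (j + 1) (N + 1), ((-1 : ℤ)) ^ m * (N.choose m) * 2 ^ m := by
        rw [hmap, Finset.sum_map]
        simp [addRightEmbedding_apply]
      rw [this, Finset.sum_Icc_succ_top (by omega), psi]
    rw [psi, hmap, Finset.sum_map]
    simp only [addRightEmbedding_apply]
    rw [Finset.sum_congr rfl hc, sum_add_distrib, ← mul_sum, hB, Nat.choose_succ_self, psi, psi]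
    push_cast
    ring
  · have h1 : Icc (j + 1) (N + 1) = ∅ := Finset.Icc_eq_empty (by omega)
    have h2 : Icc j N = ∅ := Finset.Icc_eq_empty (by omega)
    have h3 : Icc (j + 1) N = ∅ := Finset.Icc_eq_empty (by omega)
    simp [psi, h1, h2, h3]

private lemma key (N k : ℕ) :
    psi (N + 1) (2 * k + 3) = -psi N (2 * k + 1) - (N.choose (2 * k + 1)) * 2 ^ (2 * k + 1)
      - (N.choose (2 * k + 2)) * 2 ^ (2 * k + 2) := by
  have hp := psi_pascal N (2 * k + 2)
  have h1 := psi_step N (2 * k + 1)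
  have h2 := psi_step N (2 * k + 2)
  have e1 : ((-1 : ℤ)) ^ (2 * k + 1) = -1 := by
    rw [pow_succ, pow_mul]; norm_num
  have e2 : ((-1 : ℤ)) ^ (2 * k + 2) = 1 := by
    rw [show 2 * k + 2 = 2 * (k + 1) by ring, pow_mul]; norm_num
  rw [show 2 * k + 2 + 1 = 2 * k + 3 from by omega] at hp
  rw [show 2 * k + 1 + 1 = 2 * k + 2 from by omega, e1] at h1
  rw [show 2 * k + 2 + 1 = 2 * k + 3 from by omega, e2] at h2
  linarith

private def DD (n j : ℕ) : ℤ :=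
  (-1) ^ j * 2 ^ (2 * j + 1) *
    ((2 * n + 2 + j).choose (2 * j + 1) + 2 * ((2 * n + 2 + j).choose (2 * j + 2)))

private lemma G_eq (n : ℕ) : ∀ k, (-1 : ℤ) ^ k * psi (2 * n + 2 + k) (2 * k + 1)
    = ∑ j ∈ range k, DD n j := by
  intro k
  induction k with
  | zero =>
    have h0 := psi_step (2 * n + 2) 0
    have hz := psi_zero (2 * n + 2)
    have he : ((-1 : ℤ)) ^ (2 * n + 2) = 1 := by
      rw [show 2 * n + 2 = 2 * (n + 1) by ring, pow_mul]; norm_num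
    rw [hz, he] at h0
    norm_num at h0
    simpa using h0
  | succ k ih =>
    have hk := key (2 * n + 2 + k) k
    rw [show 2 * n + 2 + (k + 1) = (2 * n + 2 + k) + 1 from by omega,
        show 2 * (k + 1) + 1 = 2 * k + 3 from by omega, hk, sum_range_succ, ← ih, DD]
    push_cast
    ring

private lemma double_count (f : ℕ → ℤ) (K : ℕ) :
    ∑ k ∈ range K, ∑ j ∈ range k, f j = ∑ j ∈ range K, ((K : ℤ) - 1 - j) * f j := by
  induction K with
  | zero => simp
  | succ K ih =>
    rw [sum_range_succ, ih, sum_range_succ]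
    push_cast
    have hz : ((K : ℤ) + 1 - 1 - K) = 0 := by ring
    rw [hz, zero_mul, add_zero, ← sum_add_distrib]
    exact Finset.sum_congr rfl fun j _ => by ring

private def pp (M : ℕ) : ℤ := ∑ j ∈ range (M + 1), (-4) ^ j * ((M + j).choose (2 * j))
private def qq (M : ℕ) : ℤ := ∑ j ∈ range (M + 1), (-4) ^ j * ((M + j).choose (2 * j + 1))
private def rr (M : ℕ) : ℤ := ∑ j ∈ range (M + 1), (-4) ^ j * ((M + j).choose (2 * j + 2))
private def pp1 (M : ℕ) : ℤ :=
  ∑ j ∈ range (M + 1), (j : ℤ) * (-4) ^ j * ((M + j).choose (2 * j))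
private def qq1 (M : ℕ) : ℤ :=
  ∑ j ∈ range (M + 1), (j : ℤ) * (-4) ^ j * ((M + j).choose (2 * j + 1))
private def rr1 (M : ℕ) : ℤ :=
  ∑ j ∈ range (M + 1), (j : ℤ) * (-4) ^ j * ((M + j).choose (2 * j + 2))

private lemma qa (M : ℕ) : qq (M + 1) = pp M + qq M := by
  have h : ∀ j ∈ range (M + 1), ((-4 : ℤ)) ^ j * (((M + 1) + j).choose (2 * j + 1))
      = (-4) ^ j * ((M + j).choose (2 * j)) + (-4) ^ j * ((M + j).choose (2 * j + 1)) := by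
    intro j _
    rw [show M + 1 + j = (M + j) + 1 from by omega, Nat.choose_succ_succ]
    push_cast; ring
  rw [qq, sum_range_succ, Finset.sum_congr rfl h, sum_add_distrib, pp, qq,
      Nat.choose_eq_zero_of_lt (show M + 1 + (M + 1) < 2 * (M + 1) + 1 by omega)]
  push_cast; ring

private lemma ra (M : ℕ) : rr (M + 1) = qq M + rr M := by
  have h : ∀ j ∈ range (M + 1), ((-4 : ℤ)) ^ j * (((M + 1) + j).choose (2 * j + 2))
      = (-4) ^ j * ((M + j).choose (2 * j + 1)) + (-4) ^ j * ((M + j).choose (2 * j + 2)) := by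
    intro j _
    rw [show M + 1 + j = (M + j) + 1 from by omega,
        show 2 * j + 2 = (2 * j + 1) + 1 from by omega, Nat.choose_succ_succ]
    push_cast; ring
  rw [rr, sum_range_succ, Finset.sum_congr rfl h, sum_add_distrib, qq, rr,
      Nat.choose_eq_zero_of_lt (show M + 1 + (M + 1) < 2 * (M + 1) + 2 by omega)]
  push_cast; ring

private lemma qa1 (M : ℕ) : qq1 (M + 1) = pp1 M + qq1 M := by
  have h : ∀ j ∈ range (M + 1), ((j : ℤ)) * (-4) ^ j * (((M + 1) + j).choose (2 * j + 1))
      = (j : ℤ) * (-4) ^ j * ((M + j).choose (2 * j))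
        + (j : ℤ) * (-4) ^ j * ((M + j).choose (2 * j + 1)) := by
    intro j _
    rw [show M + 1 + j = (M + j) + 1 from by omega, Nat.choose_succ_succ]
    push_cast; ring
  rw [qq1, sum_range_succ, Finset.sum_congr rfl h, sum_add_distrib, pp1, qq1,
      Nat.choose_eq_zero_of_lt (show M + 1 + (M + 1) < 2 * (M + 1) + 1 by omega)]
  push_cast; ring

private lemma ra1 (M : ℕ) : rr1 (M + 1) = qq1 M + rr1 M := by
  have h : ∀ j ∈ range (M + 1), ((j : ℤ)) * (-4) ^ j * (((M + 1) + j).choose (2 * j + 2))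
      = (j : ℤ) * (-4) ^ j * ((M + j).choose (2 * j + 1))
        + (j : ℤ) * (-4) ^ j * ((M + j).choose (2 * j + 2)) := by
    intro j _
    rw [show M + 1 + j = (M + j) + 1 from by omega,
        show 2 * j + 2 = (2 * j + 1) + 1 from by omega, Nat.choose_succ_succ]
    push_cast; ring
  rw [rr1, sum_range_succ, Finset.sum_congr rfl h, sum_add_distrib, qq1, rr1,
      Nat.choose_eq_zero_of_lt (show M + 1 + (M + 1) < 2 * (M + 1) + 2 by omega)]
  push_cast; ring

private lemma pc (M : ℕ) : pp M = 1 - 4 * qq M - 4 * rr M := by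
  have h : ∀ i ∈ range M, ((-4 : ℤ)) ^ (i + 1) * ((M + (i + 1)).choose (2 * (i + 1)))
      = (-4) * ((-4) ^ i * ((M + i).choose (2 * i + 1)))
        + (-4) * ((-4) ^ i * ((M + i).choose (2 * i + 2))) := by
    intro i _
    rw [show M + (i + 1) = (M + i) + 1 from by omega,
        show 2 * (i + 1) = (2 * i + 1) + 1 from by omega, Nat.choose_succ_succ]
    push_cast; ring
  have hq : ∑ i ∈ range M, ((-4 : ℤ)) ^ i * ((M + i).choose (2 * i + 1)) = qq M := by
    rw [qq, sum_range_succ,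
        Nat.choose_eq_zero_of_lt (show M + M < 2 * M + 1 by omega)]
    push_cast; ring
  have hr : ∑ i ∈ range M, ((-4 : ℤ)) ^ i * ((M + i).choose (2 * i + 2)) = rr M := by
    rw [rr, sum_range_succ,
        Nat.choose_eq_zero_of_lt (show M + M < 2 * M + 2 by omega)]
    push_cast; ring
  rw [pp, sum_range_succ', Finset.sum_congr rfl h, sum_add_distrib, ← mul_sum, ← mul_sum,
      hq, hr]
  norm_num
  ring

private lemma pc1 (M : ℕ) : pp1 M = -4 * qq1 M - 4 * qq M - 4 * rr1 M - 4 * rr M := by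
  have h : ∀ i ∈ range M, (((i : ℕ) + 1 : ℤ)) * (-4) ^ (i + 1) * ((M + (i + 1)).choose (2 * (i + 1)))
      = (-4) * ((i : ℤ) * (-4) ^ i * ((M + i).choose (2 * i + 1)))
        + (-4) * ((-4) ^ i * ((M + i).choose (2 * i + 1)))
        + ((-4) * ((i : ℤ) * (-4) ^ i * ((M + i).choose (2 * i + 2)))
        + (-4) * ((-4) ^ i * ((M + i).choose (2 * i + 2)))) := by
    intro i _
    rw [show M + (i + 1) = (M + i) + 1 from by omega,
        show 2 * (i + 1) = (2 * i + 1) + 1 from by omega, Nat.choose_succ_succ]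
    push_cast; ring
  have hq : ∑ i ∈ range M, ((-4 : ℤ)) ^ i * ((M + i).choose (2 * i + 1)) = qq M := by
    rw [qq, sum_range_succ,
        Nat.choose_eq_zero_of_lt (show M + M < 2 * M + 1 by omega)]
    push_cast; ring
  have hr : ∑ i ∈ range M, ((-4 : ℤ)) ^ i * ((M + i).choose (2 * i + 2)) = rr M := by
    rw [rr, sum_range_succ,
        Nat.choose_eq_zero_of_lt (show M + M < 2 * M + 2 by omega)]
    push_cast; ring
  have hq1 : ∑ i ∈ range M, ((i : ℤ)) * (-4) ^ i * ((M + i).choose (2 * i + 1)) = qq1 M := by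
    rw [qq1, sum_range_succ,
        Nat.choose_eq_zero_of_lt (show M + M < 2 * M + 1 by omega)]
    push_cast; ring
  have hr1 : ∑ i ∈ range M, ((i : ℤ)) * (-4) ^ i * ((M + i).choose (2 * i + 2)) = rr1 M := by
    rw [rr1, sum_range_succ,
        Nat.choose_eq_zero_of_lt (show M + M < 2 * M + 2 by omega)]
    push_cast; ring
  have hsplit : pp1 M = ∑ i ∈ range M,
      (((i : ℕ) + 1 : ℤ)) * (-4) ^ (i + 1) * ((M + (i + 1)).choose (2 * (i + 1))) := by
    rw [pp1, sum_range_succ']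
    push_cast
    ring
  rw [hsplit, Finset.sum_congr rfl h, sum_add_distrib, sum_add_distrib, sum_add_distrib,
      ← mul_sum, ← mul_sum, ← mul_sum, ← mul_sum, hq, hr, hq1, hr1]
  ring

private lemma closed_forms (M : ℕ) :
    qq M = (-1) ^ (M + 1) * M ∧ 4 * rr M = (-1) ^ M * (2 * (M : ℤ) - 1) + 1 ∧
    3 * qq1 M = (-1) ^ (M + 1) * (2 * (M : ℤ) ^ 3 - 2 * M) ∧
    12 * rr1 M = (-1) ^ M * (4 * (M : ℤ) ^ 3 - 6 * M ^ 2 - 4 * M + 3) - 3 := by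
  induction M with
  | zero =>
    refine ⟨?_, ?_, ?_, ?_⟩ <;> simp [qq, rr, qq1, rr1]
  | succ M ih =>
    obtain ⟨h1, h2, h3, h4⟩ := ih
    refine ⟨?_, ?_, ?_, ?_⟩
    · rw [qa, pc]
      push_cast
      linear_combination (-3 : ℤ) * h1 - h2
    · rw [ra]
      push_cast
      linear_combination h2 + 4 * h1
    · rw [qa1, pc1]
      push_cast
      linear_combination (-3 : ℤ) * h3 - 12 * h1 - h4 - 3 * h2
    · rw [ra1]
      push_cast
      linear_combination h4 + 4 * h3

private lemma hpow (j : ℕ) : ((-1 : ℤ)) ^ j * 2 ^ (2 * j + 1) = 2 * (-4) ^ j := by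
  rw [show ((-4 : ℤ)) ^ j = (-1) ^ j * 4 ^ j from by
        rw [show ((-4) : ℤ) = (-1) * 4 from by norm_num, mul_pow],
      pow_succ, pow_mul, show ((2 : ℤ)) ^ 2 = 4 from by norm_num]
  ring

theorem cor3 (n : ℕ) :
    ∑ k ∈ Finset.range (2 * n + 2), ∑ m ∈ Finset.Icc (2 * k + 1) (2 * n + k + 2),
      (-1 : ℤ) ^ (m + k) * ((2 * n + k + 2).choose m) * 2 ^ (m - 1)
      = (2 * n + 2) ^ 2 := by
  have hN : ∀ k, 2 * n + k + 2 = 2 * n + 2 + k := fun k => by omega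
  simp only [hN]
  have hinner : ∀ k, (2 : ℤ) * (∑ m ∈ Icc (2 * k + 1) (2 * n + 2 + k),
      (-1 : ℤ) ^ (m + k) * ((2 * n + 2 + k).choose m) * 2 ^ (m - 1))
      = (-1) ^ k * psi (2 * n + 2 + k) (2 * k + 1) := by
    intro k
    rw [psi, mul_sum, mul_sum]
    refine Finset.sum_congr rfl fun m hm => ?_
    rw [mem_Icc] at hm
    obtain ⟨t, rfl⟩ : ∃ t, m = t + 1 := ⟨m - 1, by omega⟩
    simp only [Nat.add_sub_cancel]
    push_cast
    ring
  have h2 : (2 : ℤ) * (∑ k ∈ range (2 * n + 2), ∑ m ∈ Icc (2 * k + 1) (2 * n + 2 + k),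
      (-1 : ℤ) ^ (m + k) * ((2 * n + 2 + k).choose m) * 2 ^ (m - 1))
      = ∑ k ∈ range (2 * n + 2), (-1 : ℤ) ^ k * psi (2 * n + 2 + k) (2 * k + 1) := by
    rw [mul_sum]
    exact Finset.sum_congr rfl fun k _ => hinner k
  rw [Finset.sum_congr rfl fun k _ => G_eq n k, double_count] at h2
  have h5 : ∑ j ∈ range (2 * n + 2 + 1), ((2 * n + 2 : ℤ) - 1 - j) * DD n j
      = ∑ j ∈ range (2 * n + 2), ((2 * n + 2 : ℤ) - 1 - j) * DD n j := by
    rw [sum_range_succ, DD,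
        Nat.choose_eq_zero_of_lt (show 2 * n + 2 + (2 * n + 2) < 2 * (2 * n + 2) + 1 by omega),
        Nat.choose_eq_zero_of_lt (show 2 * n + 2 + (2 * n + 2) < 2 * (2 * n + 2) + 2 by omega)]
    push_cast
    ring
  have h6 : ∑ j ∈ range (2 * n + 2 + 1), ((2 * n + 2 : ℤ) - 1 - j) * DD n j
      = 2 * ((2 * n + 2 : ℤ) - 1) * qq (2 * n + 2) + 4 * ((2 * n + 2 : ℤ) - 1) * rr (2 * n + 2)
        - 2 * qq1 (2 * n + 2) - 4 * rr1 (2 * n + 2) := by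
    rw [qq, rr, qq1, rr1, mul_sum, mul_sum, mul_sum, mul_sum, ← sum_add_distrib,
        ← sum_sub_distrib, ← sum_sub_distrib]
    refine Finset.sum_congr rfl fun j _ => ?_
    rw [DD, hpow j]
    push_cast
    ring
  obtain ⟨hq, hr, hq1, hr1⟩ := closed_forms (2 * n + 2)
  have hs1 : ((-1 : ℤ)) ^ (2 * n + 2) = 1 := by
    rw [show 2 * n + 2 = 2 * (n + 1) by ring, pow_mul]; norm_num
  have hs2 : ((-1 : ℤ)) ^ (2 * n + 2 + 1) = -1 := by
    rw [pow_succ, hs1]; norm_num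
  rw [hs2] at hq hq1
  rw [hs1] at hr hr1
  push_cast at hq hr hq1 hr1 h2
  rw [← h5, h6] at h2
  have h12 : (12 : ℤ) * (∑ k ∈ range (2 * n + 2), ∑ m ∈ Icc (2 * k + 1) (2 * n + 2 + k),
      (-1 : ℤ) ^ (m + k) * ((2 * n + 2 + k).choose m) * 2 ^ (m - 1))
      = 12 * (2 * (n : ℤ) + 2) ^ 2 := by
    linear_combination 6 * h2 + 12 * (2 * (n : ℤ) + 1) * hq + 6 * (2 * (n : ℤ) + 1) * hr
      - 4 * hq1 - 2 * hr1
  linarith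
end

section
/- For every positive integer n, the double sum ∑_{k=0}^{2n} ∑_{m=2k+1}^{2n+k+1} (-1)^{m+k+1} * C(2n+k+1, m) * 2^{m-1} equals (2n+1)^2. -/
open Finset

private def bseq (n : ℕ) : ℤ := ∑ k ∈ range (n+1), (-4)^k * ((n+k).choose (2*k))
private def cseq (n : ℕ) : ℤ := ∑ k ∈ range (n+1), (-4)^k * ((n+k).choose (2*k+1))
private def Qs (j M : ℕ) : ℤ := ∑ m ∈ range (j+1), (-2)^m * (M.choose m)

private lemma cseq_succ (n : ℕ) : cseq (n+1) = bseq n + cseq n := by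
  unfold cseq bseq
  have h : ∀ k ∈ range (n+2),
      ((-4:ℤ))^k * ((n+1+k).choose (2*k+1)) =
      (-4)^k * ((n+k).choose (2*k)) + (-4)^k * ((n+k).choose (2*k+1)) := by
    intro k _
    have : (n+1+k).choose (2*k+1) = (n+k).choose (2*k) + (n+k).choose (2*k+1) := by
      have := Nat.choose_succ_succ (n+k) (2*k)
      simpa [Nat.add_right_comm] using this
    rw [this]; push_cast; ring
  rw [Finset.sum_congr rfl h, Finset.sum_add_distrib]
  rw [Finset.sum_range_succ ((fun k => ((-4:ℤ))^k * ((n+k).choose (2*k)))),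
      Finset.sum_range_succ ((fun k => ((-4:ℤ))^k * ((n+k).choose (2*k+1))))]
  have h1 : (n+(n+1)).choose (2*(n+1)) = 0 := by
    apply Nat.choose_eq_zero_of_lt; omega
  have h2 : (n+(n+1)).choose (2*(n+1)+1) = 0 := by
    apply Nat.choose_eq_zero_of_lt; omega
  rw [h1, h2]; push_cast; ring

private lemma bseq_succ (n : ℕ) : bseq (n+1) = bseq n - 4 * cseq (n+1) := by
  have e1 : bseq (n+1) =
      (∑ i ∈ range (n+1), (-4:ℤ)^(i+1) * ((n+1+(i+1)).choose (2*(i+1)))) + 1 := by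
    unfold bseq
    rw [Finset.sum_range_succ' (fun k => ((-4:ℤ))^k * ((n+1+k).choose (2*k)))]
    simp
  have e2 : ∀ i ∈ range (n+1),
      ((-4:ℤ))^(i+1) * ((n+1+(i+1)).choose (2*(i+1))) =
      (-4) * ((-4)^i * ((n+1+i).choose (2*i+1))) +
      (-4)^(i+1) * ((n+(i+1)).choose (2*(i+1))) := by
    intro i _
    have hp : (n+1+(i+1)).choose (2*(i+1)) =
        (n+1+i).choose (2*i+1) + (n+(i+1)).choose (2*(i+1)) := by
      have := Nat.choose_succ_succ (n+1+i) (2*i+1)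
      have h1 : n+1+(i+1) = (n+1+i)+1 := by ring
      have h2 : 2*(i+1) = (2*i+1)+1 := by ring
      have h3 : n+(i+1) = n+1+i := by ring
      rw [h1, h2, h3, this]
    rw [hp]; push_cast; ring
  rw [e1, Finset.sum_congr rfl e2, Finset.sum_add_distrib]
  have hc1 : cseq (n+1) = ∑ k ∈ range (n+1), (-4:ℤ)^k * ((n+1+k).choose (2*k+1)) := by
    unfold cseq
    rw [Finset.sum_range_succ]
    have h0 : (n+1+(n+1)).choose (2*(n+1)+1) = 0 := by
      apply Nat.choose_eq_zero_of_lt; omega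
    rw [h0]; simp
  have e3 : (∑ i ∈ range (n+1), (-4:ℤ) * ((-4)^i * ((n+1+i).choose (2*i+1))))
      = -4 * cseq (n+1) := by
    rw [hc1, Finset.mul_sum]
  have hb1 : (∑ k ∈ range (n+2), (-4:ℤ)^k * ((n+k).choose (2*k))) = bseq n := by
    unfold bseq
    rw [Finset.sum_range_succ]
    have h0 : (n+(n+1)).choose (2*(n+1)) = 0 := by
      apply Nat.choose_eq_zero_of_lt; omega
    rw [h0]; simp
  have e4 : (∑ i ∈ range (n+1), (-4:ℤ)^(i+1) * ((n+(i+1)).choose (2*(i+1))))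
      = bseq n - 1 := by
    have h5 := Finset.sum_range_succ' (fun k => ((-4:ℤ))^k * (((n+k).choose (2*k)):ℤ)) (n+1)
    simp only [pow_zero, one_mul, Nat.add_zero, Nat.mul_zero, Nat.choose_zero_right,
      Nat.cast_one] at h5
    rw [hb1] at h5
    linarith [h5]
  rw [e3, e4]; ring

private lemma bc_closed (n : ℕ) :
    bseq n = (-1)^n * (2*n+1) ∧ cseq n = (-1)^(n+1) * n := by
  induction n with
  | zero => constructor <;> simp [bseq, cseq]
  | succ n ih =>
    obtain ⟨hb, hc⟩ := ih
    have hcs : cseq (n+1) = (-1)^(n+1+1) * (n+1) := by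
      rw [cseq_succ, hb, hc]; push_cast; ring
    refine ⟨?_, hcs⟩
    rw [bseq_succ, hb, hcs]; push_cast; ring

private lemma Qs_succ (j M : ℕ) :
    Qs (j+1) M = Qs j M + (-2)^(j+1) * (M.choose (j+1)) := by
  unfold Qs; rw [Finset.sum_range_succ]

private lemma Qs_top (j M : ℕ) : Qs (j+1) (M+1) = Qs (j+1) M - 2 * Qs j M := by
  unfold Qs
  rw [Finset.sum_range_succ' (fun m => ((-2:ℤ))^m * ((M+1).choose m))]
  have h : ∀ i ∈ range (j+1),
      ((-2:ℤ))^(i+1) * ((M+1).choose (i+1)) =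
      (-2) * ((-2)^i * (M.choose i)) + (-2)^(i+1) * (M.choose (i+1)) := by
    intro i _
    rw [Nat.choose_succ_succ M i]; push_cast; ring
  rw [Finset.sum_congr rfl h, Finset.sum_add_distrib]
  have e1 : (∑ i ∈ range (j+1), (-2:ℤ) * ((-2)^i * (M.choose i)))
      = -2 * ∑ m ∈ range (j+1), (-2:ℤ)^m * (M.choose m) := by
    rw [← Finset.mul_sum]
  have e2 : (∑ i ∈ range (j+1), (-2:ℤ)^(i+1) * (M.choose (i+1)))
      = (∑ m ∈ range (j+2), (-2:ℤ)^m * (M.choose m)) - 1 := by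
    rw [Finset.sum_range_succ' (fun m => ((-2:ℤ))^m * (M.choose m))]
    simp
  rw [e1, e2]; simp; ring

private lemma Qs_diag (M : ℕ) : Qs M M = (-1)^M := by
  unfold Qs
  have := add_pow (-2 : ℤ) 1 M
  simp only [one_pow, mul_one] at this
  have h : ((-2 : ℤ) + 1) = -1 := by norm_num
  rw [h] at this
  rw [← this]

private lemma Qs_key (k M : ℕ) :
    Qs (2*k) (M+1) = -Qs (2*k) M + 2 * 4^k * (M.choose (2*k)) := by
  cases k with
  | zero => simp [Qs]
  | succ k =>
    have h2 : 2*(k+1) = (2*k+1)+1 := by ring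
    rw [h2, Qs_top (2*k+1) M, Qs_succ (2*k+1) M]
    have h4 : ((-2:ℤ))^(2*k+1+1) = 4^(k+1) := by
      have : (2*k+1+1) = 2*(k+1) := by ring
      rw [this, pow_mul]; norm_num
    rw [h4]; ring

private lemma G_closed (N : ℕ) :
    ∑ k ∈ range (N+1), (-1:ℤ)^k * Qs (2*k) (N+k+1) = (-1)^N * (N+1) * (2*N+1) := by
  induction N with
  | zero => simp [Qs]
  | succ N ih =>
    rw [Finset.sum_range_succ]
    have h : ∀ k ∈ range (N+1),
        ((-1:ℤ))^k * Qs (2*k) (N+1+k+1) =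
        -((-1)^k * Qs (2*k) (N+k+1)) + 2 * (-4)^k * ((N+k+1).choose (2*k)) := by
      intro k _
      have e : N+1+k+1 = (N+k+1)+1 := by ring
      rw [e, Qs_key k (N+k+1)]
      have e2 : ((-4:ℤ))^k = (-1)^k * 4^k := by
        rw [show ((-4:ℤ)) = (-1) * 4 by norm_num, mul_pow]
      rw [e2]; ring
    rw [Finset.sum_congr rfl h, Finset.sum_add_distrib]
    have e1 : (∑ k ∈ range (N+1), -(((-1:ℤ))^k * Qs (2*k) (N+k+1)))
        = -((-1)^N * (N+1) * (2*N+1)) := by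
      rw [Finset.sum_neg_distrib, ih]
    have e2 : (∑ k ∈ range (N+1), 2 * (-4:ℤ)^k * ((N+k+1).choose (2*k)))
        = 2 * ((-1)^(N+1) * (2*(N+1)+1) - (-4)^(N+1)) := by
      have hb := (bc_closed (N+1)).1
      unfold bseq at hb
      rw [Finset.sum_range_succ (fun k => ((-4:ℤ))^k * ((N+1+k).choose (2*k)))] at hb
      have hd : (N+1+(N+1)).choose (2*(N+1)) = 1 := by
        have : N+1+(N+1) = 2*(N+1) := by ring
        rw [this, Nat.choose_self]
      rw [hd] at hb
      push_cast at hb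
      have : (∑ k ∈ range (N+1), (-4:ℤ)^k * ((N+1+k).choose (2*k)))
          = (-1)^(N+1) * (2*(N+1)+1) - (-4)^(N+1) := by
        push_cast; linarith [hb]
      calc (∑ k ∈ range (N+1), 2 * (-4:ℤ)^k * ((N+k+1).choose (2*k)))
          = 2 * ∑ k ∈ range (N+1), (-4:ℤ)^k * ((N+1+k).choose (2*k)) := by
            rw [Finset.mul_sum]
            apply Finset.sum_congr rfl
            intro k _
            have : N+k+1 = N+1+k := by ring
            rw [this]; ring
        _ = 2 * ((-1)^(N+1) * (2*(N+1)+1) - (-4)^(N+1)) := by rw [this]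
    have e3 : Qs (2*(N+1)) (N+1+(N+1)+1) = -1 + 2 * 4^(N+1) := by
      have hdiag := Qs_diag (2*N+3)
      have hs := Qs_succ (2*N+2) (2*N+3)
      have ha : 2*(N+1) = 2*N+2 := by ring
      have hb' : N+1+(N+1)+1 = 2*N+3 := by ring
      rw [ha, hb']
      have hq : Qs (2*N+2+1) (2*N+3) = (-1)^(2*N+3) := by
        have : 2*N+2+1 = 2*N+3 := by ring
        rw [this]; exact hdiag
      rw [hq] at hs
      have hodd : ((-1:ℤ))^(2*N+3) = -1 := by
        have : 2*N+3 = 2*(N+1)+1 := by ring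
        rw [this, pow_succ, pow_mul]; norm_num
      have hpow : ((-2:ℤ))^(2*N+2+1) = -2 * 4^(N+1) := by
        have : 2*N+2+1 = 2*(N+1)+1 := by ring
        rw [this, pow_succ, pow_mul]; norm_num; ring
      have hch : (2*N+3).choose (2*N+2+1) = 1 := by
        have : 2*N+2+1 = 2*N+3 := by ring
        rw [this, Nat.choose_self]
      rw [hodd, hpow, hch] at hs
      push_cast at hs
      linarith [hs]
    rw [e1, e2, e3]
    have hneg : ((-4:ℤ))^(N+1) = (-1)^(N+1) * 4^(N+1) := by
      rw [show ((-4:ℤ)) = (-1) * 4 by norm_num, mul_pow]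
    rw [hneg]
    push_cast
    rw [pow_succ]
    ring

private lemma innerSumCor4 (n k : ℕ) (hk : k ≤ 2*n) :
    2 * (∑ m ∈ Finset.Icc (2*k+1) (2*n+k+1),
      (-1:ℤ)^(m+k+1) * ((2*n+k+1).choose m) * 2^(m-1))
    = 1 + (-1)^k * Qs (2*k) (2*n+k+1) := by
  set M := 2*n+k+1 with hM
  have step1 : 2 * (∑ m ∈ Finset.Icc (2*k+1) M,
      (-1:ℤ)^(m+k+1) * (M.choose m) * 2^(m-1))
      = ∑ m ∈ Finset.Icc (2*k+1) M, (-1:ℤ)^(k+1) * ((-2)^m * (M.choose m)) := by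
    rw [Finset.mul_sum]
    apply Finset.sum_congr rfl
    intro m hm
    rw [Finset.mem_Icc] at hm
    have hm1 : 1 ≤ m := by omega
    have h2m : (2:ℤ) * 2^(m-1) = 2^m := by
      rw [← pow_succ']
      congr 1
      omega
    have hsign : ((-1:ℤ))^(m+k+1) = (-1)^m * (-1)^(k+1) := by
      rw [show m+k+1 = m+(k+1) by ring, pow_add]
    have hneg2 : ((-2:ℤ))^m = (-1)^m * 2^m := by
      rw [show ((-2:ℤ)) = (-1) * 2 by norm_num, mul_pow]
    rw [hsign, hneg2, ← h2m]; ring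
  rw [step1, ← Finset.mul_sum]
  have hIcc : Finset.Icc (2*k+1) M = Finset.Ico (2*k+1) (M+1) := by
    rw [Finset.Ico_add_one_right_eq_Icc]
  rw [hIcc]
  have hle : 2*k+1 ≤ M+1 := by omega
  rw [Finset.sum_Ico_eq_sub (fun m => ((-2:ℤ))^m * (M.choose m)) hle]
  have hfull : (∑ m ∈ range (M+1), (-2:ℤ)^m * (M.choose m)) = (-1)^(k+1) := by
    have := Qs_diag M
    unfold Qs at this
    rw [this, hM]
    rw [show 2*n+k+1 = 2*n+(k+1) by ring, pow_add, pow_mul]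
    norm_num
  have hpart : (∑ m ∈ range (2*k+1), (-2:ℤ)^m * (M.choose m)) = Qs (2*k) M := by
    unfold Qs; rfl
  rw [hfull, hpart]
  have hsq : ((-1:ℤ))^(k+1) * (-1)^(k+1) = 1 := by
    rw [← pow_add, show k+1+(k+1) = 2*(k+1) by ring, pow_mul]
    norm_num
  have hflip : ((-1:ℤ))^(k+1) = -(-1)^k := by rw [pow_succ]; ring
  calc ((-1:ℤ))^(k+1) * ((-1)^(k+1) - Qs (2*k) M)
      = (-1)^(k+1) * (-1)^(k+1) - (-1)^(k+1) * Qs (2*k) M := by ring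
    _ = 1 + (-1)^k * Qs (2*k) M := by rw [hsq, hflip]; ring

theorem cor4 (n : ℕ) (hn : 1 ≤ n) :
    ∑ k ∈ Finset.range (2 * n + 1), ∑ m ∈ Finset.Icc (2 * k + 1) (2 * n + k + 1),
      (-1 : ℤ) ^ (m + k + 1) * ((2 * n + k + 1).choose m) * 2 ^ (m - 1)
      = (2 * n + 1) ^ 2 := by
  have key : 2 * (∑ k ∈ Finset.range (2*n+1), ∑ m ∈ Finset.Icc (2*k+1) (2*n+k+1),
      (-1:ℤ)^(m+k+1) * ((2*n+k+1).choose m) * 2^(m-1))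
      = ∑ k ∈ Finset.range (2*n+1), (1 + (-1:ℤ)^k * Qs (2*k) (2*n+k+1)) := by
    rw [Finset.mul_sum]
    apply Finset.sum_congr rfl
    intro k hk
    rw [Finset.mem_range] at hk
    exact innerSumCor4 n k (by omega)
  have hG := G_closed (2*n)
  have heven : ((-1:ℤ))^(2*n) = 1 := by rw [pow_mul]; norm_num
  rw [heven] at hG
  have hsum : ∑ k ∈ Finset.range (2*n+1), (1 + (-1:ℤ)^k * Qs (2*k) (2*n+k+1))
      = (2*n+1) + ∑ k ∈ Finset.range (2*n+1), (-1:ℤ)^k * Qs (2*k) (2*n+k+1) := by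
    rw [Finset.sum_add_distrib]
    simp [add_comm]
  have hidx : ∀ k ∈ Finset.range (2*n+1),
      ((-1:ℤ))^k * Qs (2*k) (2*n+k+1) = (-1)^k * Qs (2*k) (2*n+k+1) := fun _ _ => rfl
  rw [hsum] at key
  have hG' : (∑ k ∈ Finset.range (2*n+1), (-1:ℤ)^k * Qs (2*k) (2*n+k+1))
      = (2*n+1) * (2*(2*n)+1) := by
    rw [hG]
    push_cast
    ring
  rw [hG'] at key
  have : 2 * (∑ k ∈ Finset.range (2*n+1), ∑ m ∈ Finset.Icc (2*k+1) (2*n+k+1),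
      (-1:ℤ)^(m+k+1) * ((2*n+k+1).choose m) * 2^(m-1)) = 2 * (2*n+1)^2 := by
    rw [key]; push_cast; ring
  linarith [this]
end

section
/- For every nonnegative integer n, ∑_{m=0}^{n+1} (-1)^{m+n+1} * C(n+m+1, 2m) * 2^{2m-1} = n + 3/2. -/
open Finset

private def Fq (n : ℕ) : ℚ :=
  ∑ m ∈ range (n + 2), (-1 : ℚ) ^ (m + n + 1) * ((n + m + 1).choose (2 * m)) * 4 ^ m

private def Hq (n : ℕ) : ℚ :=
  ∑ k ∈ range (n + 1), (-1 : ℚ) ^ (k + n) * ((n + k + 1).choose (2 * k + 1)) * 4 ^ k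

private lemma Hq_succ (n : ℕ) : Hq (n + 1) = -Hq n + Fq n := by
  have h0 : ∀ k, (((n + 1) + k + 1).choose (2 * k + 1) : ℚ)
      = (n + k + 1).choose (2 * k) + (n + k + 1).choose (2 * k + 1) := by
    intro k
    rw [show n + 1 + k + 1 = (n + k + 1) + 1 by omega, Nat.choose_succ_succ]
    push_cast
    ring
  have hHn : -Hq n = ∑ k ∈ range (n + 2),
      (-1 : ℚ) ^ (k + n + 1) * ((n + k + 1).choose (2 * k + 1)) * 4 ^ k := by
    rw [Finset.sum_range_succ, Nat.choose_eq_zero_of_lt (by omega), Hq,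
      ← Finset.sum_neg_distrib]
    simp only [Nat.cast_zero, mul_zero, zero_mul, add_zero]
    apply sum_congr rfl
    intro k _
    rw [pow_succ]
    ring
  rw [Hq, Fq, hHn, ← Finset.sum_add_distrib]
  apply sum_congr rfl
  intro k _
  rw [h0 k, show k + (n + 1) = k + n + 1 by ring]
  ring

private lemma Fq_succ (n : ℕ) : Fq (n + 1) = -Fq n + 4 * Hq (n + 1) := by
  have key : Fq (n + 1)
      = (∑ i ∈ range (n + 2),
          (-1 : ℚ) ^ (i + n + 1) * ((n + i + 2).choose (2 * i + 2)) * 4 ^ (i + 1))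
        + (∑ i ∈ range (n + 2),
          (-1 : ℚ) ^ (i + n + 1) * ((n + i + 2).choose (2 * i + 1)) * 4 ^ (i + 1))
        + (-1 : ℚ) ^ n := by
    rw [Fq, Finset.sum_range_succ']
    have h0 : ∀ i, (((n + 1) + (i + 1) + 1).choose (2 * (i + 1)) : ℚ)
        = (n + i + 2).choose (2 * i + 1) + (n + i + 2).choose (2 * i + 2) := by
      intro i
      rw [show n + 1 + (i + 1) + 1 = (n + i + 2) + 1 by omega,
        show 2 * (i + 1) = (2 * i + 1) + 1 by ring, Nat.choose_succ_succ]
      push_cast; ring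
    rw [← Finset.sum_add_distrib]
    congr 1
    · apply sum_congr rfl
      intro i _
      rw [h0 i, show i + 1 + (n + 1) + 1 = (i + n + 1) + 1 + 1 by ring]
      ring
    · simp [Nat.choose_zero_right]
      rw [pow_succ, pow_succ]
      ring
  have hFn : -Fq n - (-1 : ℚ) ^ n = ∑ i ∈ range (n + 2),
      (-1 : ℚ) ^ (i + n + 1) * ((n + i + 2).choose (2 * i + 2)) * 4 ^ (i + 1) := by
    rw [Finset.sum_range_succ, Nat.choose_eq_zero_of_lt (by omega)]
    simp only [Nat.cast_zero, mul_zero, zero_mul, add_zero]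
    have e1 : ∑ i ∈ range (n + 1),
        (-1 : ℚ) ^ (i + n + 1) * ((n + i + 2).choose (2 * i + 2)) * 4 ^ (i + 1)
        = ∑ i ∈ range (n + 1),
        -((-1 : ℚ) ^ (i + 1 + n + 1) * ((n + (i + 1) + 1).choose (2 * (i + 1))) * 4 ^ (i + 1)) := by
      apply sum_congr rfl
      intro i _
      rw [show n + (i + 1) + 1 = n + i + 2 by ring, show 2 * (i + 1) = 2 * i + 2 by ring,
        show i + 1 + n + 1 = (i + n + 1) + 1 by ring, pow_succ]
      ring
    rw [e1, Finset.sum_neg_distrib, Fq, Finset.sum_range_succ']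
    simp only [Nat.mul_zero, Nat.choose_zero_right, Nat.cast_one, pow_zero, mul_one,
      Nat.zero_add, zero_add]
    rw [pow_succ]
    ring
  have hH : 4 * Hq (n+1) = ∑ i ∈ range (n + 2),
      (-1 : ℚ) ^ (i + n + 1) * ((n + i + 2).choose (2 * i + 1)) * 4 ^ (i + 1) := by
    rw [Hq, Finset.mul_sum]
    apply sum_congr rfl
    intro i _
    rw [show n + 1 + i + 1 = n + i + 2 by ring, show i + (n+1) = i + n + 1 by ring, pow_succ]
    ring
  rw [key, ← hFn, ← hH]
  ring

private lemma Fq_Hq (n : ℕ) : Fq n = 2 * n + 3 ∧ Hq n = n + 1 := by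
  induction n with
  | zero =>
    constructor
    · rw [Fq]; norm_num [Finset.sum_range_succ]
    · rw [Hq]; norm_num [Finset.sum_range_succ]
  | succ n ih =>
    have h1 : Hq (n + 1) = (n : ℚ) + 2 := by
      rw [Hq_succ, ih.1, ih.2]; ring
    refine ⟨?_, by rw [h1]; push_cast; ring⟩
    rw [Fq_succ, h1, ih.1]
    push_cast
    ring

theorem thm2_half (n : ℕ) :
    ∑ m ∈ Finset.range (n + 2),
      (-1 : ℚ) ^ (m + n + 1) * ((n + m + 1).choose (2 * m)) * (2 : ℚ) ^ (2 * (m : ℤ) - 1)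
      = (n : ℚ) + 3 / 2 := by
  have hpow : ∀ m : ℕ, (2 : ℚ) ^ (2 * (m : ℤ) - 1) = 4 ^ m / 2 := by
    intro m
    rw [zpow_sub₀ (by norm_num : (2:ℚ) ≠ 0), zpow_one,
      show (2 : ℤ) * m = ((2 * m : ℕ) : ℤ) by push_cast; ring, zpow_natCast, pow_mul]
    norm_num
  have : ∑ m ∈ Finset.range (n + 2),
      (-1 : ℚ) ^ (m + n + 1) * ((n + m + 1).choose (2 * m)) * (2 : ℚ) ^ (2 * (m : ℤ) - 1)
      = Fq n / 2 := by
    rw [Fq, Finset.sum_div]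
    apply Finset.sum_congr rfl
    intro m _
    rw [hpow m]
    ring
  rw [this, (Fq_Hq n).1]
  ring
end

section
/- For every nonnegative integer n, ∑_{m=0}^{n} (-1)^{m+n} * C(n+m+1, 2m+1) * 4^m = n + 1. -/
open Finset

private def Saux (n : ℕ) : ℤ :=
  ∑ m ∈ Finset.range (n + 1),
    (-1 : ℤ) ^ (m + n) * ((n + m + 1).choose (2 * m + 1)) * 4 ^ m

private def Taux (n : ℕ) : ℤ :=
  ∑ m ∈ Finset.range (n + 1),
    (-1 : ℤ) ^ (m + n) * ((n + m).choose (2 * m)) * 4 ^ m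

private lemma hT (n : ℕ) : Taux (n + 1) = 4 * Saux n - Taux n := by
  have h1 : Taux n = ∑ m ∈ Finset.range (n + 1 + 1),
      (-1 : ℤ) ^ (m + n) * ((n + m).choose (2 * m)) * 4 ^ m := by
    unfold Taux
    conv_rhs => rw [Finset.sum_range_succ]
    have hz : (n + (n + 1)).choose (2 * (n + 1)) = 0 :=
      Nat.choose_eq_zero_of_lt (by omega)
    rw [hz]
    push_cast
    ring
  rw [h1]
  unfold Taux Saux
  conv_lhs => rw [Finset.sum_range_succ' _ (n + 1)]
  conv_rhs => rw [Finset.sum_range_succ' _ (n + 1)]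
  rw [sub_add_eq_sub_sub, Finset.mul_sum, ← Finset.sum_sub_distrib]
  have key : ∀ k ∈ Finset.range (n + 1),
      ((-1 : ℤ)) ^ (k + 1 + (n + 1)) * ((n + 1 + (k + 1)).choose (2 * (k + 1))) * 4 ^ (k + 1)
      = 4 * ((-1 : ℤ) ^ (k + n) * ((n + k + 1).choose (2 * k + 1)) * 4 ^ k)
        - (-1 : ℤ) ^ (k + 1 + n) * ((n + (k + 1)).choose (2 * (k + 1))) * 4 ^ (k + 1) := by
    intro k _
    have hc : (n + 1 + (k + 1)).choose (2 * (k + 1))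
        = (n + k + 1).choose (2 * k + 1) + (n + (k + 1)).choose (2 * (k + 1)) := by
      have h2 : n + 1 + (k + 1) = (n + k + 1) + 1 := by omega
      rw [h2, show 2 * (k + 1) = (2 * k + 1) + 1 by omega, Nat.choose_succ_succ]
      congr 2 <;> omega
    rw [hc]
    push_cast
    ring
  rw [Finset.sum_congr rfl key]
  simp [pow_succ]
  ring

private lemma hS (n : ℕ) : Saux (n + 1) = Taux (n + 1) - Saux n := by
  have hSn : Saux n = ∑ m ∈ Finset.range (n + 1 + 1),
      (-1 : ℤ) ^ (m + n) * ((n + m + 1).choose (2 * m + 1)) * 4 ^ m := by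
    unfold Saux
    conv_rhs => rw [Finset.sum_range_succ]
    have hz : (n + (n + 1) + 1).choose (2 * (n + 1) + 1) = 0 :=
      Nat.choose_eq_zero_of_lt (by omega)
    rw [hz]
    push_cast
    ring
  rw [hSn]
  unfold Saux Taux
  rw [← Finset.sum_sub_distrib]
  refine Finset.sum_congr rfl fun m _ => ?_
  have hc : (n + 1 + m + 1).choose (2 * m + 1)
      = (n + 1 + m).choose (2 * m) + (n + m + 1).choose (2 * m + 1) := by
    rw [Nat.choose_succ_succ]
    congr 2
    omega
  rw [hc]
  push_cast
  ring

private lemma main (n : ℕ) : Saux n = n + 1 ∧ Taux n = 2 * n + 1 := by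
  induction n with
  | zero => constructor <;> simp [Saux, Taux]
  | succ n ih =>
    obtain ⟨hs, ht⟩ := ih
    have ht' : Taux (n + 1) = 2 * (n + 1) + 1 := by
      rw [hT, hs, ht]; push_cast; ring
    refine ⟨?_, ht'⟩
    rw [hS, ht', hs]; push_cast; ring

theorem thm1_restated (n : ℕ) :
    ∑ m ∈ Finset.range (n + 1),
      (-1 : ℤ) ^ (m + n) * ((n + m + 1).choose (2 * m + 1)) * 4 ^ m = n + 1 := by
  exact (main n).1
end
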